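/- Let a > 0, a ≠ 1, and define X : ℝ² → ℝ³ by X(u,v) = ( cosh(a u)·sin(a v)/a , [−sin v·cos(a v)·sinh u·sinh(a u) + a·sin(a v)·cos v·sinh u·sinh(a u) + a·sin v·cos(a v)·cosh u·cosh(a u) − cos v·sin(a v)·cosh u·cosh(a u)]/(a²−1) + sinh u·cos v , [a·cos v·sin(a v)·cosh u·sinh(a u) − sin v·cos(a v)·cosh u·sinh(a u) + a·sin v·cos(a v)·sinh u·cosh(a u) − cos v·sin(a v)·sinh u·cosh(a u)]/(a²−1) + cos v·cosh u ). Then X is Lorentz-conformal: for all (u,v) ∈ ℝ², ⟨X_u, X_u⟩_L = ⟨X_v, X_v⟩_L and ⟨X_u, X_v⟩_L = 0. -/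

import Mathlib

open Real

/-- Lorentzian inner product on ℝ³: ⟨p,q⟩ = p₁q₁ + p₂q₂ − p₃q₃. -/
noncomputable def lorentz (p q : ℝ × ℝ × ℝ) : ℝ :=
  p.1 * q.1 + p.2.1 * q.2.1 - p.2.2 * q.2.2

/-- First coordinate of the bending helicoid with spacelike axis. -/
noncomputable def X1 (a u v : ℝ) : ℝ :=
  cosh (a*u) * sin (a*v) / a

/-- Second coordinate of the bending helicoid with spacelike axis. -/
noncomputable def X2 (a u v : ℝ) : ℝ :=
  (- sin v * cos (a*v) * sinh u * sinh (a*u)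
   + a * sin (a*v) * cos v * sinh u * sinh (a*u)
   + a * sin v * cos (a*v) * cosh u * cosh (a*u)
   - cos v * sin (a*v) * cosh u * cosh (a*u)) / (a^2 - 1)
  + sinh u * cos v

/-- Third coordinate of the bending helicoid with spacelike axis. -/
noncomputable def X3 (a u v : ℝ) : ℝ :=
  (a * cos v * sin (a*v) * cosh u * sinh (a*u)
   - sin v * cos (a*v) * cosh u * sinh (a*u)
   + a * sin v * cos (a*v) * sinh u * cosh (a*u)
   - cos v * sin (a*v) * sinh u * cosh (a*u)) / (a^2 - 1)
  + cos v * cosh u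

/-- Partial derivative of X with respect to u. -/
noncomputable def Xu (a u v : ℝ) : ℝ × ℝ × ℝ :=
  (deriv (fun s => X1 a s v) u, deriv (fun s => X2 a s v) u, deriv (fun s => X3 a s v) u)

/-- Partial derivative of X with respect to v. -/
noncomputable def Xv (a u v : ℝ) : ℝ × ℝ × ℝ :=
  (deriv (fun t => X1 a u t) v, deriv (fun t => X2 a u t) v, deriv (fun t => X3 a u t) v)

section Aux

variable (a u v : ℝ)

lemma aux_sinh_au : HasDerivAt (fun s : ℝ => sinh (a*s)) (cosh (a*u) * a) u := by
  simpa using ((hasDerivAt_id u).const_mul a).sinh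

lemma aux_cosh_au : HasDerivAt (fun s : ℝ => cosh (a*s)) (sinh (a*u) * a) u := by
  simpa using ((hasDerivAt_id u).const_mul a).cosh

lemma aux_sin_av : HasDerivAt (fun t : ℝ => sin (a*t)) (cos (a*v) * a) v := by
  simpa using ((hasDerivAt_id v).const_mul a).sin

lemma aux_cos_av : HasDerivAt (fun t : ℝ => cos (a*t)) (-sin (a*v) * a) v := by
  simpa using ((hasDerivAt_id v).const_mul a).cos

lemma dX1u (ha : a ≠ 0) :
    HasDerivAt (fun s => X1 a s v) (sinh (a*u) * sin (a*v)) u := by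
  have h := ((aux_cosh_au a u).mul_const (sin (a*v))).div_const a
  have hv : sinh (a*u) * a * sin (a*v) / a = sinh (a*u) * sin (a*v) := by
    field_simp
  rw [← hv]
  exact h

lemma dX1v (ha : a ≠ 0) :
    HasDerivAt (fun t => X1 a u t) (cosh (a*u) * cos (a*v)) v := by
  have e : (fun t => X1 a u t) = (fun t => cosh (a*u) * sin (a*t) / a) := rfl
  have h := (((aux_sin_av a v).const_mul (cosh (a*u)))).div_const a
  have hv : cosh (a*u) * (cos (a*v) * a) / a = cosh (a*u) * cos (a*v) := by
    field_simp
  rw [e, ← hv]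
  exact h

lemma dX2u (ha : a^2 - 1 ≠ 0) :
    HasDerivAt (fun s => X2 a s v)
      (cos v*cosh u + cos v*sin (a*v)*sinh u*cosh (a*u) + sin v*cos (a*v)*cosh u*sinh (a*u)) u := by
  have e : (fun s => X2 a s v) = (fun s =>
      ((- sin v * cos (a*v) + a * sin (a*v) * cos v) / (a^2-1)) * (sinh s * sinh (a*s))
      + ((a * sin v * cos (a*v) - cos v * sin (a*v)) / (a^2-1)) * (cosh s * cosh (a*s))
      + cos v * sinh s) := by
    funext s; unfold X2; ring
  rw [e]
  have h := ((((Real.hasDerivAt_sinh u).mul (aux_sinh_au a u)).const_mul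
        ((- sin v * cos (a*v) + a * sin (a*v) * cos v) / (a^2-1))).add
      (((Real.hasDerivAt_cosh u).mul (aux_cosh_au a u)).const_mul
        ((a * sin v * cos (a*v) - cos v * sin (a*v)) / (a^2-1)))).add
      ((Real.hasDerivAt_sinh u).const_mul (cos v))
  refine h.congr_deriv ?_
  field_simp
  ring

lemma dX3u (ha : a^2 - 1 ≠ 0) :
    HasDerivAt (fun s => X3 a s v)
      (cos v*sinh u + cos v*sin (a*v)*cosh u*cosh (a*u) + sin v*cos (a*v)*sinh u*sinh (a*u)) u := by
  have e : (fun s => X3 a s v) = (fun s =>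
      ((a * cos v * sin (a*v) - sin v * cos (a*v)) / (a^2-1)) * (cosh s * sinh (a*s))
      + ((a * sin v * cos (a*v) - cos v * sin (a*v)) / (a^2-1)) * (sinh s * cosh (a*s))
      + cos v * cosh s) := by
    funext s; unfold X3; ring
  rw [e]
  have h := ((((Real.hasDerivAt_cosh u).mul (aux_sinh_au a u)).const_mul
        ((a * cos v * sin (a*v) - sin v * cos (a*v)) / (a^2-1))).add
      (((Real.hasDerivAt_sinh u).mul (aux_cosh_au a u)).const_mul
        ((a * sin v * cos (a*v) - cos v * sin (a*v)) / (a^2-1)))).add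
      ((Real.hasDerivAt_cosh u).const_mul (cos v))
  refine h.congr_deriv ?_
  field_simp
  ring

lemma dX2v (ha : a^2 - 1 ≠ 0) :
    HasDerivAt (fun t => X2 a u t)
      (cos v*cos (a*v)*sinh u*sinh (a*u) - sin v*sinh u - sin v*sin (a*v)*cosh u*cosh (a*u)) v := by
  have e : (fun t => X2 a u t) = (fun t =>
      ((- sinh u * sinh (a*u) + a * cosh u * cosh (a*u)) / (a^2-1)) * (sin t * cos (a*t))
      + ((a * sinh u * sinh (a*u) - cosh u * cosh (a*u)) / (a^2-1)) * (sin (a*t) * cos t)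
      + sinh u * cos t) := by
    funext t; unfold X2; ring
  rw [e]
  have h := ((((Real.hasDerivAt_sin v).mul (aux_cos_av a v)).const_mul
        ((- sinh u * sinh (a*u) + a * cosh u * cosh (a*u)) / (a^2-1))).add
      (((aux_sin_av a v).mul (Real.hasDerivAt_cos v)).const_mul
        ((a * sinh u * sinh (a*u) - cosh u * cosh (a*u)) / (a^2-1)))).add
      ((Real.hasDerivAt_cos v).const_mul (sinh u))
  refine h.congr_deriv ?_
  field_simp
  ring

lemma dX3v (ha : a^2 - 1 ≠ 0) :
    HasDerivAt (fun t => X3 a u t)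
      (cos v*cos (a*v)*cosh u*sinh (a*u) - sin v*cosh u - sin v*sin (a*v)*sinh u*cosh (a*u)) v := by
  have e : (fun t => X3 a u t) = (fun t =>
      ((a * cosh u * sinh (a*u) - sinh u * cosh (a*u)) / (a^2-1)) * (cos t * sin (a*t))
      + ((- cosh u * sinh (a*u) + a * sinh u * cosh (a*u)) / (a^2-1)) * (sin t * cos (a*t))
      + cosh u * cos t) := by
    funext t; unfold X3; ring
  rw [e]
  have h := ((((Real.hasDerivAt_cos v).mul (aux_sin_av a v)).const_mul
        ((a * cosh u * sinh (a*u) - sinh u * cosh (a*u)) / (a^2-1))).add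
      (((Real.hasDerivAt_sin v).mul (aux_cos_av a v)).const_mul
        ((- cosh u * sinh (a*u) + a * sinh u * cosh (a*u)) / (a^2-1)))).add
      ((Real.hasDerivAt_cos v).const_mul (cosh u))
  refine h.congr_deriv ?_
  field_simp
  ring

end Aux

/-- The bending helicoid with spacelike axis is Lorentz-conformal. -/
theorem bending_helicoid_spacelike_conformal (a : ℝ) (ha : 0 < a) (ha1 : a ≠ 1) (u v : ℝ) :
    lorentz (Xu a u v) (Xu a u v) = lorentz (Xv a u v) (Xv a u v) ∧
    lorentz (Xu a u v) (Xv a u v) = 0 := by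
  have ha0 : a ≠ 0 := ne_of_gt ha
  have hd : a^2 - 1 ≠ 0 := by
    intro h
    have : (a-1)*(a+1) = 0 := by linarith [h]
    rcases mul_eq_zero.1 this with h1 | h2
    · exact ha1 (by linarith)
    · linarith
  have hXu : Xu a u v = (sinh (a*u) * sin (a*v), cos v*cosh u + cos v*sin (a*v)*sinh u*cosh (a*u) + sin v*cos (a*v)*cosh u*sinh (a*u), cos v*sinh u + cos v*sin (a*v)*cosh u*cosh (a*u) + sin v*cos (a*v)*sinh u*sinh (a*u)) := by
    unfold Xu
    rw [(dX1u a u v ha0).deriv, (dX2u a u v hd).deriv, (dX3u a u v hd).deriv]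
  have hXv : Xv a u v = (cosh (a*u) * cos (a*v), cos v*cos (a*v)*sinh u*sinh (a*u) - sin v*sinh u - sin v*sin (a*v)*cosh u*cosh (a*u), cos v*cos (a*v)*cosh u*sinh (a*u) - sin v*cosh u - sin v*sin (a*v)*sinh u*cosh (a*u)) := by
    unfold Xv
    rw [(dX1v a u v ha0).deriv, (dX2v a u v hd).deriv, (dX3v a u v hd).deriv]
  have h1 : sin v ^ 2 + cos v ^ 2 = 1 := sin_sq_add_cos_sq v
  have h2 : sin (a*v) ^ 2 + cos (a*v) ^ 2 = 1 := sin_sq_add_cos_sq (a*v)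
  have h3 : cosh u ^ 2 - sinh u ^ 2 = 1 := cosh_sq_sub_sinh_sq u
  have h4 : cosh (a*u) ^ 2 - sinh (a*u) ^ 2 = 1 := cosh_sq_sub_sinh_sq (a*u)
  rw [hXu, hXv]
  unfold lorentz
  constructor
  · linear_combination (cosh u^2 - sinh u^2 + cos (a*v)^2*cosh u^2*sinh (a*u)^2 - cos (a*v)^2*sinh u^2*sinh (a*u)^2 - sin (a*v)^2*cosh u^2*cosh (a*u)^2 + sin (a*v)^2*sinh u^2*cosh (a*u)^2) * h1 + (-cosh (a*u)^2 + cosh u^2*sinh (a*u)^2 - sinh u^2*sinh (a*u)^2) * h2 + (1 + sinh (a*u)^2 - sin (a*v)^2*cosh (a*u)^2 - sin (a*v)^2*sinh (a*u)^2) * h3 + (-1) * h4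
  · linear_combination (-sin (a*v)*cos (a*v)*cosh u^2*sinh (a*u)*cosh (a*u) + sin (a*v)*cos (a*v)*sinh u^2*sinh (a*u)*cosh (a*u)) * h1 + (-sin (a*v)*cos (a*v)*sinh (a*u)*cosh (a*u)) * h3
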